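/- Fix real constants A > 0, M ≥ 0, ρ0 ∈ (0,1), b > 1, and c > 0, and for γ > 0 define J(γ) := (M/(Aρ0))·(e^{Aγ} − 1) + c. Then there exists γ* > 0 such that for all γ ∈ (0, γ*), 1 + log₂( A·b·γ / ln(1 + (ρ0 − (M/(J(γ)·A))·(e^{Aγ} − 1))/e^{Aγ}) ) < 0; hence the sufficient packet size g*(γ) = max{0, 1 + log₂(Abγ/ln(1 + (ρ0 − (M/(J(γ)A))(e^{Aγ}−1))/e^{Aγ}))} equals 0 and the sufficient information transmission rate of Corollary 1 equals 0. (For sufficiently small communication delay, the timing information implicit in the triggering events suffices and the scheme stabilizes with transmission rate arbitrarily close to zero.) -/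

import Mathlib

open Set Filter

/-- **Zero rate suffices for small delays.** With the triggering threshold
`J(γ) = (M/(Aρ0))(e^{Aγ}−1) + c`, for all sufficiently small delays `γ` the
quantity `1 + log₂(Abγ/ln(1 + (ρ0 − (M/(J(γ)A))(e^{Aγ}−1))/e^{Aγ}))` is
negative; hence the sufficient packet size `g*(γ)` equals `0` and the
sufficient information transmission rate of Corollary 1 equals `0`. -/
theorem zero_rate_small_delay
    (A M ρ0 b c : ℝ) (J : ℝ → ℝ)
    (hA : 0 < A) (hM : 0 ≤ M)
    (hρ0 : 0 < ρ0) (hρ1 : ρ0 < 1)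
    (hb : 1 < b) (hc : 0 < c)
    (hJ : ∀ γ, J γ = (M / (A * ρ0)) * (Real.exp (A * γ) - 1) + c) :
    ∃ γstar > (0 : ℝ), ∀ γ : ℝ, 0 < γ → γ < γstar →
      (1 + Real.logb 2 (A * b * γ /
          Real.log (1 + (ρ0 - (M / (J γ * A)) * (Real.exp (A * γ) - 1)) /
            Real.exp (A * γ))) < 0) ∧
      (max 0 (1 + Real.logb 2 (A * b * γ /
          Real.log (1 + (ρ0 - (M / (J γ * A)) * (Real.exp (A * γ) - 1)) /
            Real.exp (A * γ)))) = 0) ∧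
      ((A / Real.log ((J γ + M / A) / (ρ0 * J γ + M / A))) *
        max 0 (1 + Real.logb 2 (A * b * γ /
          Real.log (1 + (ρ0 - (M / (J γ * A)) * (Real.exp (A * γ) - 1)) /
            Real.exp (A * γ)))) = 0) := by
  -- abbreviations
  set D : ℝ → ℝ := fun γ =>
    1 + (ρ0 - (M / (J γ * A)) * (Real.exp (A * γ) - 1)) / Real.exp (A * γ) with hD
  set g : ℝ → ℝ := fun γ => A * b * γ / Real.log (D γ) with hg
  -- J tends to c at 0
  have hJcont : Filter.Tendsto J (nhds 0) (nhds c) := by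
    have : Continuous fun γ : ℝ => (M / (A * ρ0)) * (Real.exp (A * γ) - 1) + c := by
      continuity
    have h0 := this.tendsto 0
    simp only [mul_zero, Real.exp_zero, sub_self, mul_zero, zero_add] at h0
    refine h0.congr' ?_
    filter_upwards with γ using (hJ γ).symm
  -- D tends to 1 + ρ0
  have hDc : Filter.Tendsto D (nhds 0) (nhds (1 + ρ0)) := by
    have h1 : Filter.Tendsto (fun γ : ℝ => Real.exp (A * γ)) (nhds 0) (nhds 1) := by
      have : Continuous fun γ : ℝ => Real.exp (A * γ) := by continuity
      have h := this.tendsto 0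
      simpa using h
    have h2 : Filter.Tendsto (fun γ : ℝ => M / (J γ * A)) (nhds 0) (nhds (M / (c * A))) := by
      exact tendsto_const_nhds.div (hJcont.mul tendsto_const_nhds)
        (by positivity)
    have h3 : Filter.Tendsto (fun γ : ℝ => (M / (J γ * A)) * (Real.exp (A * γ) - 1))
        (nhds 0) (nhds 0) := by
      have := h2.mul (h1.sub (tendsto_const_nhds (x := (1:ℝ))))
      simpa using this
    have h4 : Filter.Tendsto
        (fun γ : ℝ => (ρ0 - (M / (J γ * A)) * (Real.exp (A * γ) - 1)) / Real.exp (A * γ))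
        (nhds 0) (nhds ρ0) := by
      have := ((tendsto_const_nhds (x := ρ0)).sub h3).div h1 one_ne_zero
      simpa [Pi.div_def] using this
    have := (tendsto_const_nhds (x := (1:ℝ))).add h4
    simpa [hD] using this
  -- log D tends to log (1+ρ0), positive
  have hlogpos : 0 < Real.log (1 + ρ0) := Real.log_pos (by linarith)
  have hlogD : Filter.Tendsto (fun γ => Real.log (D γ)) (nhds 0) (nhds (Real.log (1 + ρ0))) :=
    (Real.continuousAt_log (by positivity)).tendsto.comp hDc
  -- g tends to 0
  have hgc : Filter.Tendsto g (nhds 0) (nhds 0) := by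
    have hnum : Filter.Tendsto (fun γ : ℝ => A * b * γ) (nhds 0) (nhds 0) := by
      have : Continuous fun γ : ℝ => A * b * γ := by continuity
      simpa using this.tendsto 0
    have := hnum.div hlogD (ne_of_gt hlogpos)
    simpa [hg, Pi.div_def] using this
  -- eventual facts
  have E1 : ∀ᶠ γ in nhds 0, 0 < Real.log (D γ) :=
    hlogD.eventually (eventually_gt_nhds hlogpos)
  have E2 : ∀ᶠ γ in nhds 0, g γ < 1/2 :=
    hgc.eventually (eventually_lt_nhds (by norm_num))
  obtain ⟨γstar, hγpos, hball⟩ := Metric.eventually_nhds_iff_ball.mp (E1.and E2)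
  refine ⟨γstar, hγpos, fun γ hγ0 hγlt => ?_⟩
  have hmem : γ ∈ Metric.ball (0:ℝ) γstar := by
    simp [Real.dist_eq, abs_of_pos hγ0, hγlt]
  obtain ⟨hlogDγ, hgγ⟩ := hball γ hmem
  have hgpos : 0 < g γ := by
    apply div_pos _ hlogDγ
    positivity
  have hlogb : Real.logb 2 (g γ) < -1 := by
    have h12 : Real.logb 2 (g γ) < Real.logb 2 (1/2) :=
      Real.logb_lt_logb (by norm_num) hgpos hgγ
    have : Real.logb 2 (1/2 : ℝ) = -1 := by
      rw [one_div, Real.logb_inv, Real.logb_self_eq_one] <;> norm_num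
    linarith
  have key : 1 + Real.logb 2 (A * b * γ /
      Real.log (1 + (ρ0 - (M / (J γ * A)) * (Real.exp (A * γ) - 1)) /
        Real.exp (A * γ))) < 0 := by
    have : g γ = A * b * γ /
        Real.log (1 + (ρ0 - (M / (J γ * A)) * (Real.exp (A * γ) - 1)) /
          Real.exp (A * γ)) := rfl
    rw [← this]
    linarith
  exact ⟨key, max_eq_left (le_of_lt key), by rw [max_eq_left (le_of_lt key), mul_zero]⟩
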